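/- Lemma 2 (compatibility with right common multiples): let R be a ring with no zero divisors. Suppose X·M = Y·R₀ and X·L = Y·Q with Y ≠ 0, and suppose M·X̄ = L·Ȳ for some X̄, Ȳ ∈ R. Then R₀·X̄ = Q·Ȳ. -/
import Mathlib

/-- Lemma 2: in a ring with no zero divisors, if `X·M = Y·R₀`, `X·L = Y·Q`
with `Y ≠ 0`, and `M·X̄ = L·Ȳ` is a right common multiple of `M` and `L`,
then `R₀·X̄ = Q·Ȳ`. -/
theorem divisor_couple_right_multiple
    {R : Type*} [Ring R] [NoZeroDivisors R]
    (X Y M L R₀ Q Xbar Ybar : R)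
    (hY : Y ≠ 0)
    (h1 : X * M = Y * R₀)
    (h2 : X * L = Y * Q)
    (h3 : M * Xbar = L * Ybar) :
    R₀ * Xbar = Q * Ybar := by
  have key : Y * (R₀ * Xbar - Q * Ybar) = 0 := by
    rw [mul_sub, ← mul_assoc, ← mul_assoc, ← h1, ← h2, mul_assoc, mul_assoc, h3, sub_self]
  rcases mul_eq_zero.mp key with h | h
  · exact absurd h hY
  · exact sub_eq_zero.mp h
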